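/- The identity s_λ(q^ρ) s_μ(q^{λ+ρ}) = s_μ(q^ρ) s_λ(q^{μ+ρ}) holds for all partitions λ, μ, where s_λ(q^{μ+ρ}) denotes the principal specialization of the Schur function at x_i = q^{μ_i + 1/2 - i} (in the stable sense with power sums p_n(q^{μ+ρ}) = ∑_{i=1}^{ℓ} (q^{nμ_i}-1) q^{n(1/2-i)} + 1/(q^{n/2}-q^{-n/2})). -/

import Mathlib

open Finset MvPolynomial

variable (K : Type*) [Field K]

/-- The Vandermonde polynomial `∏_{i<j} (x_i - x_j)`. -/
noncomputable def vander (N : ℕ) : MvPolynomial (Fin N) K :=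
  ∏ p ∈ Finset.univ.filter (fun p : Fin N × Fin N => p.1 < p.2), (X p.1 - X p.2)

/-- The bialternant `∑_σ sign(σ) ∏_i x_{σ(i)}^{λ_i + N - i}` (indices `1 ≤ i ≤ N`). -/
noncomputable def schurAlternant (N : ℕ) (lam : Fin N → ℕ) : MvPolynomial (Fin N) K :=
  ∑ σ : Equiv.Perm (Fin N),
    (Equiv.Perm.sign σ : ℤ) • ∏ i, X (σ i) ^ (lam i + (N - 1 - (i : ℕ)))

/-- `S` is the Schur polynomial `s_λ(x₁,…,x_N)`, characterized by the bialternant formula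
`s_λ · ∏_{i<j}(x_i - x_j) = ∑_σ sign(σ) ∏_i x_{σ(i)}^{λ_i + N - i}`. -/
def IsSchur (N : ℕ) (lam : Fin N → ℕ) (S : MvPolynomial (Fin N) K) : Prop :=
  S * vander K N = schurAlternant K N lam

/-- Evaluation of a symmetric function written as a polynomial in the power sums
(variable `n` stands for `p_{n+1}`) in `N` variables `x₁,…,x_N`. -/
noncomputable def toVars (N : ℕ) (f : MvPolynomial ℕ K) : MvPolynomial (Fin N) K :=
  MvPolynomial.aeval (fun n => MvPolynomial.psum (Fin N) K (n + 1)) f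

/-- The principal specialization `q^{μ+ρ}`: the value substituted for the power sum `p_n`,
namely `p_n(q^{μ+ρ}) = ∑_{i=1}^{ℓ} (q^{nμ_i} - 1) q^{n(1/2-i)} + 1/(q^{n/2} - q^{-n/2})`,
written in terms of `s = q^{1/2}`. -/
noncomputable def schurSpec (s : K) (Lmu : ℕ) (mu : ℕ → ℕ) : ℕ → K :=
  fun m =>
    (∑ i ∈ Finset.range Lmu,
        (s ^ (2 * (m + 1) * mu i) - 1) * (s⁻¹) ^ ((m + 1) * (2 * i + 1))) +
      (s ^ (m + 1) - (s⁻¹) ^ (m + 1))⁻¹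

/-! ### Auxiliary machinery -/


variable {K}

/-- `u^z` in the field, for a unit `u`. -/
noncomputable def up (u : Kˣ) (z : ℤ) : K := ((u ^ z : Kˣ) : K)

@[simp] lemma up_zero (u : Kˣ) : up u 0 = 1 := by simp [up]
lemma up_add (u : Kˣ) (z w : ℤ) : up u (z + w) = up u z * up u w := by
  simp [up, zpow_add]
@[simp] lemma up_ne_zero (u : Kˣ) (z : ℤ) : up u z ≠ 0 := Units.ne_zero _
lemma up_pow (u : Kˣ) (z : ℤ) (n : ℕ) : (up u z) ^ n = up u (z * n) := by
  rw [up, ← Units.val_pow_eq_pow_val, ← zpow_natCast (u ^ z), ← zpow_mul]; rfl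
lemma up_natCast (u : Kˣ) (n : ℕ) : up u (n : ℤ) = (u : K) ^ n := by
  rw [up, zpow_natCast, Units.val_pow_eq_pow_val]
lemma up_neg_natCast (u : Kˣ) (n : ℕ) : up u (-(n : ℤ)) = ((u : K)⁻¹) ^ n := by
  rw [up, zpow_neg, zpow_natCast, ← inv_pow]
  simp
lemma up_prod {ι : Type*} (u : Kˣ) (s : Finset ι) (f : ι → ℤ) :
    ∏ i ∈ s, up u (f i) = up u (∑ i ∈ s, f i) := by
  classical
  induction s using Finset.induction with
  | empty => simp
  | @insert a s h ih => rw [Finset.prod_insert h, Finset.sum_insert h, up_add, ih]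

lemma up_injective {u : Kˣ} (hu : Function.Injective fun z : ℤ => u ^ z) :
    Function.Injective (up u) := fun _ _ h => hu (Units.ext h)

lemma prod_lt_pairs {M : Type*} [CommMonoid M] {N : ℕ} (f : Fin N → Fin N → M) :
    ∏ p ∈ Finset.univ.filter (fun p : Fin N × Fin N => p.1 < p.2), f p.1 p.2
      = ∏ i : Fin N, ∏ j ∈ Finset.Ioi i, f i j := by
  rw [Finset.prod_sigma']
  refine Finset.prod_nbij' (fun p => ⟨p.1, p.2⟩) (fun x => (x.1, x.2)) ?_ ?_ ?_ ?_ ?_ <;>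
    simp [Finset.mem_sigma, Finset.mem_filter]

/-- Shifted exponents `ν i + (N-1-i)`. -/
def ex (N : ℕ) (ν : ℕ → ℕ) : Fin N → ℕ := fun i => ν i + (N - 1 - (i : ℕ))

/-- Specialization points `x_i = u^{2 ν_i - 2i - 1}`. -/
noncomputable def xsp (u : Kˣ) (N : ℕ) (ν : ℕ → ℕ) : Fin N → K :=
  fun i => up u (2 * (ν i : ℤ) - 2 * (i : ℕ) - 1)

lemma xsp_eq (u : Kˣ) (N : ℕ) (ν : ℕ → ℕ) (i : Fin N) :
    xsp u N ν i = up u (2 * (ex N ν i : ℤ) - (2 * (N : ℤ) - 1)) := by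
  have hi : (i : ℕ) < N := i.2
  unfold xsp ex
  congr 1
  push_cast
  omega

/-- The "Gram" matrix `u^{2 f i g j}`. -/
noncomputable def Gm (u : Kˣ) (N : ℕ) (f g : Fin N → ℕ) : Matrix (Fin N) (Fin N) K :=
  Matrix.of fun i j => up u (2 * (f i : ℤ) * (g j : ℤ))

lemma Gm_det_comm (u : Kˣ) (N : ℕ) (f g : Fin N → ℕ) :
    (Gm u N f g).det = (Gm u N g f).det := by
  rw [← Matrix.det_transpose]
  congr 1
  ext i j
  simp only [Gm, Matrix.transpose_apply, Matrix.of_apply]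
  ring_nf

/-- The Vandermonde-type matrix `u^{2 f i j}`. -/
noncomputable def Vm (u : Kˣ) (N : ℕ) (f : Fin N → ℕ) : Matrix (Fin N) (Fin N) K :=
  Matrix.of fun i j => up u (2 * (f i : ℤ) * (j : ℕ))

lemma Vm_det (u : Kˣ) (N : ℕ) (f : Fin N → ℕ) :
    (Vm u N f).det = ∏ i : Fin N, ∏ j ∈ Finset.Ioi i,
      (up u (2 * (f j : ℤ)) - up u (2 * (f i : ℤ))) := by
  have h : Vm u N f = Matrix.vandermonde (fun i => up u (2 * (f i : ℤ))) := by
    ext i j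
    simp only [Vm, Matrix.vandermonde_apply, Matrix.of_apply, up_pow]
  rw [h, Matrix.det_vandermonde]

lemma Vm_det_ne_zero {u : Kˣ} (hu : Function.Injective fun z : ℤ => u ^ z)
    (N : ℕ) {f : Fin N → ℕ} (hf : Function.Injective f) :
    (Vm u N f).det ≠ 0 := by
  rw [Vm_det]
  refine Finset.prod_ne_zero_iff.2 fun i _ => Finset.prod_ne_zero_iff.2 fun j hj => ?_
  rw [sub_ne_zero]
  intro h
  have h1 := up_injective hu h
  have h2 : f j = f i := by omega
  have h3 : j = i := hf h2
  rw [h3] at hj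
  exact absurd (Finset.mem_Ioi.1 hj) (lt_irrefl i)

/-- `Gm f (ex N 0)` is `Vm f` with reversed columns. -/
lemma Gm_rev (u : Kˣ) (N : ℕ) (f : Fin N → ℕ) :
    (Gm u N f (ex N fun _ => 0)).det
      = (Equiv.Perm.sign (Fin.revPerm : Equiv.Perm (Fin N)) : ℤ) • (Vm u N f).det := by
  have h : Gm u N f (ex N fun _ => 0) = (Vm u N f).submatrix id Fin.revPerm := by
    ext i j
    simp only [Gm, Vm, Matrix.submatrix_apply, Matrix.of_apply, id_eq, Fin.revPerm_apply]
    congr 2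
    simp only [ex, Fin.val_rev]
    try omega
  rw [h, Matrix.det_permute', zsmul_eq_mul]

section eval

variable (u : Kˣ) (N : ℕ)

lemma aeval_schurAlternant (ν lam : ℕ → ℕ) :
    MvPolynomial.aeval (xsp u N ν) (schurAlternant K N (fun i : Fin N => lam i))
      = up u (-(2 * (N : ℤ) - 1) * ∑ i : Fin N, (ex N lam i : ℤ))
          * (Gm u N (ex N ν) (ex N lam)).det := by
  rw [schurAlternant, map_sum, Matrix.det_apply, Finset.mul_sum]
  refine Finset.sum_congr rfl fun σ _ => ?_
  rw [map_zsmul, map_prod]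
  simp only [map_pow, aeval_X]
  have key : (∏ i : Fin N, xsp u N ν (σ i) ^ ((fun i : Fin N => lam i) i + (N - 1 - (i : ℕ))))
      = up u (-(2 * (N : ℤ) - 1) * ∑ i : Fin N, (ex N lam i : ℤ))
          * ∏ i : Fin N, Gm u N (ex N ν) (ex N lam) (σ i) i := by
    have h1 : ∀ i : Fin N,
        xsp u N ν (σ i) ^ ((fun i : Fin N => lam i) i + (N - 1 - (i : ℕ)))
          = up u (-(2 * (N : ℤ) - 1) * (ex N lam i : ℤ))
              * up u (2 * (ex N ν (σ i) : ℤ) * (ex N lam i : ℤ)) := by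
      intro i
      rw [xsp_eq, up_pow, ← up_add]
      congr 1
      have h2 : ((fun i : Fin N => lam i) i + (N - 1 - (i : ℕ)) : ℕ) = ex N lam i := rfl
      rw [h2]
      ring
    rw [Finset.prod_congr rfl fun i _ => h1 i, Finset.prod_mul_distrib, up_prod,
      ← Finset.mul_sum]
    rfl
  rw [key, zsmul_eq_mul, Units.smul_def, zsmul_eq_mul]
  ring

lemma aeval_vander (ν : ℕ → ℕ) :
    MvPolynomial.aeval (xsp u N ν) (vander K N)
      = (∏ i : Fin N, ∏ _j ∈ Finset.Ioi i, (-(up u (-(2 * (N : ℤ) - 1)))))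
          * (Vm u N (ex N ν)).det := by
  rw [vander, map_prod]
  simp only [map_sub, aeval_X]
  rw [prod_lt_pairs (fun i j => xsp u N ν i - xsp u N ν j), Vm_det,
    ← Finset.prod_mul_distrib]
  refine Finset.prod_congr rfl fun i _ => ?_
  rw [← Finset.prod_mul_distrib]
  refine Finset.prod_congr rfl fun j _ => ?_
  rw [xsp_eq, xsp_eq]
  have h : ∀ k : Fin N, up u (2 * (ex N ν k : ℤ) - (2 * (N : ℤ) - 1))
      = up u (2 * (ex N ν k : ℤ)) * up u (-(2 * (N : ℤ) - 1)) := by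
    intro k; rw [← up_add, sub_eq_add_neg]
  rw [h i, h j]
  ring

end eval

/-- strict antitonicity of the shifted exponents gives injectivity. -/
lemma ex_injective {N : ℕ} {ν : ℕ → ℕ} (hν : Antitone ν) :
    Function.Injective (ex N ν) := by
  have key : ∀ i j : Fin N, i < j → ex N ν j < ex N ν i := by
    intro i j hij
    have h1 : ν j ≤ ν i := hν (le_of_lt hij)
    have hjN : (j : ℕ) < N := j.2
    have h2 : (i : ℕ) < (j : ℕ) := hij
    unfold ex
    omega
  intro i j h
  rcases lt_trichotomy i j with hij | hij | hij
  · exact absurd h (ne_of_gt (key i j hij))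
  · exact hij
  · exact absurd h (ne_of_lt (key j i hij))

/-- The finite-`N` symmetry identity. -/
lemma finite_sym (u : Kˣ) (hu : Function.Injective fun z : ℤ => u ^ z)
    (N : ℕ) (lam mu : ℕ → ℕ) (hlam : Antitone lam) (hmu : Antitone mu)
    (fl fm : MvPolynomial ℕ K)
    (hl : IsSchur K N (fun i : Fin N => lam i) (toVars K N fl))
    (hm : IsSchur K N (fun i : Fin N => mu i) (toVars K N fm)) :
    MvPolynomial.aeval (fun m => ∑ i : Fin N, xsp u N (fun _ => 0) i ^ (m + 1)) fl *
        MvPolynomial.aeval (fun m => ∑ i : Fin N, xsp u N lam i ^ (m + 1)) fm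
      = MvPolynomial.aeval (fun m => ∑ i : Fin N, xsp u N (fun _ => 0) i ^ (m + 1)) fm *
          MvPolynomial.aeval (fun m => ∑ i : Fin N, xsp u N mu i ^ (m + 1)) fl := by
  classical
  have bridge : ∀ (x : Fin N → K) (f : MvPolynomial ℕ K),
      MvPolynomial.aeval x (toVars K N f)
        = MvPolynomial.aeval (fun m => ∑ i : Fin N, x i ^ (m + 1)) f := by
    intro x f
    have hg : (fun n : ℕ => MvPolynomial.aeval x (MvPolynomial.psum (Fin N) K (n + 1)))
        = fun m => ∑ i : Fin N, x i ^ (m + 1) := by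
      funext n
      simp [MvPolynomial.psum]
    rw [toVars, comp_aeval_apply, hg]
  have hl' : toVars K N fl * vander K N = schurAlternant K N (fun i : Fin N => lam i) := hl
  have hm' : toVars K N fm * vander K N = schurAlternant K N (fun i : Fin N => mu i) := hm
  have e1 := congrArg (MvPolynomial.aeval (xsp u N mu)) hl'
  have e2 := congrArg (MvPolynomial.aeval (xsp u N lam)) hm'
  have e3 := congrArg (MvPolynomial.aeval (xsp u N (fun _ => 0))) hl'
  have e4 := congrArg (MvPolynomial.aeval (xsp u N (fun _ => 0))) hm'
  rw [map_mul, bridge, aeval_vander, aeval_schurAlternant] at e1 e2 e3 e4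
  rw [Gm_det_comm u N (ex N mu) (ex N lam)] at e1
  rw [Gm_det_comm u N (ex N (fun _ => 0)) (ex N lam), Gm_rev u N (ex N lam),
    zsmul_eq_mul] at e3
  rw [Gm_det_comm u N (ex N (fun _ => 0)) (ex N mu), Gm_rev u N (ex N mu),
    zsmul_eq_mul] at e4
  set sgn : K := ((Equiv.Perm.sign (Fin.revPerm : Equiv.Perm (Fin N)) : ℤ) : K) with hsgn
  set κ := (∏ i : Fin N, ∏ _j ∈ Finset.Ioi i, (-(up u (-(2 * (N : ℤ) - 1))))) with hκ
  set Va := (Vm u N (ex N lam)).det with hVa'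
  set Vb := (Vm u N (ex N mu)).det with hVb'
  set Vc := (Vm u N (ex N (fun _ => 0))).det with hVc'
  set Gab := (Gm u N (ex N lam) (ex N mu)).det with hGab
  set cA := up u (-(2 * (N : ℤ) - 1) * ∑ i : Fin N, (ex N lam i : ℤ)) with hcA
  set cB := up u (-(2 * (N : ℤ) - 1) * ∑ i : Fin N, (ex N mu i : ℤ)) with hcB
  set SL0 := MvPolynomial.aeval (fun m => ∑ i : Fin N, xsp u N (fun _ => 0) i ^ (m + 1)) fl
    with hSL0
  set SM0 := MvPolynomial.aeval (fun m => ∑ i : Fin N, xsp u N (fun _ => 0) i ^ (m + 1)) fm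
    with hSM0
  set SLm := MvPolynomial.aeval (fun m => ∑ i : Fin N, xsp u N mu i ^ (m + 1)) fl with hSLm
  set SMl := MvPolynomial.aeval (fun m => ∑ i : Fin N, xsp u N lam i ^ (m + 1)) fm with hSMl
  have hκ0 : κ ≠ 0 := by
    rw [hκ]
    refine Finset.prod_ne_zero_iff.2 fun i _ => Finset.prod_ne_zero_iff.2 fun j _ => ?_
    simp
  have hVa0 : Va ≠ 0 := Vm_det_ne_zero hu N (ex_injective hlam)
  have hVb0 : Vb ≠ 0 := Vm_det_ne_zero hu N (ex_injective hmu)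
  have hVc0 : Vc ≠ 0 := Vm_det_ne_zero hu N (ex_injective (fun _ _ _ => le_rfl))
  apply mul_right_cancel₀ (show (κ * Vc) * ((κ * Va) * (κ * Vb)) ≠ 0 from
    mul_ne_zero (mul_ne_zero hκ0 hVc0)
      (mul_ne_zero (mul_ne_zero hκ0 hVa0) (mul_ne_zero hκ0 hVb0)))
  linear_combination (SMl * ((κ * Va) * (κ * Vb))) * e3 + (cA * sgn * Va * (κ * Vb)) * e2
    - (SLm * ((κ * Va) * (κ * Vb))) * e4 - (cB * sgn * Vb * (κ * Va)) * e1

/-- The power sums of the principal specialization points. -/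
lemma geom_aux {r : K} (hr0 : r ≠ 0) (hr2 : r ^ 2 ≠ 1) (X : K) :
    r * ((X - 1) / (r ^ 2 - 1)) = (r⁻¹ - r)⁻¹ * (1 - X) := by
  have h21 : r ^ 2 - 1 ≠ 0 := sub_ne_zero.2 hr2
  have hir : r⁻¹ - r ≠ 0 := by
    intro h
    apply hr2
    have h2 : r⁻¹ = r := sub_eq_zero.1 h
    calc r ^ 2 = r⁻¹ * r := by rw [pow_two, h2]
      _ = 1 := inv_mul_cancel₀ hr0
  have h21' : (1 : K) - r ^ 2 ≠ 0 := fun h => h21 (by linear_combination -h)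
  have key : r⁻¹ - r = (1 - r ^ 2) / r := by field_simp
  rw [key, inv_div, ← mul_div_assoc, div_mul_eq_mul_div, div_eq_div_iff h21 h21']
  ring

lemma psum_xsp (u : Kˣ) (hu : Function.Injective fun z : ℤ => u ^ z)
    (N Lν : ℕ) (ν : ℕ → ℕ) (hLν : ∀ i, Lν ≤ i → ν i = 0) (hN : Lν ≤ N) (m : ℕ) :
    ∑ i : Fin N, xsp u N ν i ^ (m + 1)
      = schurSpec K (u : K) Lν ν m
          - ((u : K) ^ (m + 1) - ((u : K)⁻¹) ^ (m + 1))⁻¹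
              * (((u : K)⁻¹) ^ (2 * N)) ^ (m + 1) := by
  set s : K := (u : K) with hsdef
  have hs : s ≠ 0 := u.ne_zero
  set r : K := (s⁻¹) ^ (m + 1) with hrdef
  have hr : r = up u (-((m + 1 : ℕ) : ℤ)) := (up_neg_natCast u (m + 1)).symm
  have hr0 : r ≠ 0 := by rw [hr]; exact up_ne_zero u _
  have hr2 : r ^ 2 ≠ 1 := by
    rw [hr, up_pow]
    intro h
    have h0 : up u (-((m + 1 : ℕ) : ℤ) * (2 : ℕ)) = up u 0 := by rw [h, up_zero]
    have := up_injective hu h0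
    omega
  have hq : s ^ (m + 1) = r⁻¹ := by rw [hrdef, ← inv_pow, inv_inv]
  have hqr : s ^ (m + 1) - r ≠ 0 := by
    rw [hq, sub_ne_zero]
    intro h
    apply hr2
    calc r ^ 2 = r⁻¹ * r := by rw [pow_two, h]
      _ = 1 := inv_mul_cancel₀ hr0
  have hterm : ∀ i : Fin N, xsp u N ν i ^ (m + 1)
      = s ^ (2 * (m + 1) * ν i) * (s⁻¹) ^ ((m + 1) * (2 * (i : ℕ) + 1)) := by
    intro i
    show (up u (2 * (ν i : ℤ) - 2 * (i : ℕ) - 1)) ^ (m + 1) = _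
    rw [up_pow]
    rw [show ((2 * (ν i : ℤ) - 2 * (i : ℕ) - 1) * ((m + 1 : ℕ) : ℤ))
        = ((2 * (m + 1) * ν i : ℕ) : ℤ) + (-(((m + 1) * (2 * (i : ℕ) + 1) : ℕ) : ℤ)) from by
      push_cast; ring]
    rw [up_add, up_natCast, up_neg_natCast]
  calc ∑ i : Fin N, xsp u N ν i ^ (m + 1)
      = ∑ i ∈ Finset.range N,
          s ^ (2 * (m + 1) * ν i) * (s⁻¹) ^ ((m + 1) * (2 * i + 1)) := by
        rw [Finset.sum_congr rfl fun i _ => hterm i]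
        exact Fin.sum_univ_eq_sum_range
          (fun i => s ^ (2 * (m + 1) * ν i) * (s⁻¹) ^ ((m + 1) * (2 * i + 1))) N
    _ = (∑ i ∈ Finset.range N,
          (s ^ (2 * (m + 1) * ν i) - 1) * (s⁻¹) ^ ((m + 1) * (2 * i + 1)))
        + ∑ i ∈ Finset.range N, (s⁻¹) ^ ((m + 1) * (2 * i + 1)) := by
        rw [← Finset.sum_add_distrib]
        exact Finset.sum_congr rfl fun i _ => by ring
    _ = (∑ i ∈ Finset.range Lν,
          (s ^ (2 * (m + 1) * ν i) - 1) * (s⁻¹) ^ ((m + 1) * (2 * i + 1)))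
        + ∑ i ∈ Finset.range N, (s⁻¹) ^ ((m + 1) * (2 * i + 1)) := by
        congr 1
        refine (Finset.sum_subset (Finset.range_subset_range.2 hN) fun i _ hi => ?_).symm
        rw [hLν i (not_lt.1 (fun hc => hi (Finset.mem_range.2 hc)))]
        simp
    _ = (∑ i ∈ Finset.range Lν,
          (s ^ (2 * (m + 1) * ν i) - 1) * (s⁻¹) ^ ((m + 1) * (2 * i + 1)))
        + (s ^ (m + 1) - r)⁻¹ * (1 - (r ^ 2) ^ N) := by
        congr 1
        have h1 : ∀ i : ℕ, (s⁻¹) ^ ((m + 1) * (2 * i + 1)) = r * (r ^ 2) ^ i := by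
          intro i
          rw [hrdef, ← pow_mul, ← pow_mul, ← pow_add]
          congr 1
          ring
        rw [Finset.sum_congr rfl fun i _ => h1 i, ← Finset.mul_sum, geom_sum_eq hr2, hq,
          geom_aux hr0 hr2]
    _ = schurSpec K s Lν ν m
        - (s ^ (m + 1) - (s⁻¹) ^ (m + 1))⁻¹ * (((s⁻¹) ^ (2 * N)) ^ (m + 1)) := by
        simp only [schurSpec]
        have hX : ((s⁻¹) ^ (2 * N)) ^ (m + 1) = (r ^ 2) ^ N := by
          rw [hrdef, ← pow_mul, ← pow_mul, ← pow_mul]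
          congr 1
          ring
        rw [hX, ← hrdef]
        ring

/-- The symmetry `s_λ(q^ρ) s_μ(q^{λ+ρ}) = s_μ(q^ρ) s_λ(q^{μ+ρ})` of the principal
specializations of Schur functions. Here `fl`, `fm` are the expressions of the Schur functions
`s_λ`, `s_μ` in terms of the power sums (so that in any number `N` of variables, large enough,
they evaluate to the Schur polynomials), and `s = q^{1/2}` is a generic parameter. -/
theorem schur_principal_specialization_symmetry (F : Type*) [Field F]
    (lam mu : ℕ → ℕ) (hlam : Antitone lam) (hmu : Antitone mu)
    (Ll Lm : ℕ) (hLl : ∀ i, lam i ≠ 0 ↔ i < Ll) (hLm : ∀ i, mu i ≠ 0 ↔ i < Lm)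
    (fl fm : MvPolynomial ℕ (RatFunc F))
    (hfl : ∀ N, Ll ≤ N → IsSchur (RatFunc F) N (fun i : Fin N => lam i)
      (toVars (RatFunc F) N fl))
    (hfm : ∀ N, Lm ≤ N → IsSchur (RatFunc F) N (fun i : Fin N => mu i)
      (toVars (RatFunc F) N fm)) :
    MvPolynomial.aeval (schurSpec (RatFunc F) RatFunc.X 0 (fun _ => 0)) fl *
        MvPolynomial.aeval (schurSpec (RatFunc F) RatFunc.X Ll lam) fm
      = MvPolynomial.aeval (schurSpec (RatFunc F) RatFunc.X 0 (fun _ => 0)) fm *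
          MvPolynomial.aeval (schurSpec (RatFunc F) RatFunc.X Lm mu) fl := by
  classical
  have hs : (RatFunc.X : RatFunc F) ≠ 0 := RatFunc.X_ne_zero
  set s : RatFunc F := RatFunc.X with hsdef
  set u : (RatFunc F)ˣ := Units.mk0 s hs with hudef
  have hus : (u : RatFunc F) = s := rfl
  -- X is not a root of unity
  have huone : ∀ z : ℤ, u ^ z = 1 → z = 0 := by
    have hXn : ∀ n : ℕ, u ^ n = 1 → n = 0 := by
      intro n hn
      have h1 : (RatFunc.X : RatFunc F) ^ n = 1 := by
        have := congrArg (Units.val) hn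
        rwa [Units.val_pow_eq_pow_val, hus, Units.val_one] at this
      have h2 : (algebraMap (Polynomial F) (RatFunc F)) (Polynomial.X ^ n)
          = algebraMap (Polynomial F) (RatFunc F) 1 := by
        rw [map_pow, RatFunc.algebraMap_X, map_one, h1]
      have h3 := RatFunc.algebraMap_injective F h2
      have h4 := congrArg Polynomial.natDegree h3
      simpa using h4
    intro z hz
    obtain ⟨n, hn | hn⟩ := z.eq_nat_or_neg
    · rw [hn, zpow_natCast] at hz
      rw [hn, hXn n hz]
      rfl
    · rw [hn, zpow_neg, zpow_natCast, inv_eq_one] at hz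
      rw [hn, hXn n hz]
      rfl
  have hu : Function.Injective fun z : ℤ => u ^ z := by
    intro z w h
    simp only at h
    have h1 : u ^ (z - w) = 1 := by
      rw [zpow_sub, h, mul_inv_cancel]
    have := huone _ h1
    omega
  -- lengths
  have hlam0 : ∀ i, Ll ≤ i → lam i = 0 := by
    intro i hi
    by_contra h0
    exact absurd ((hLl i).1 h0) (not_lt.2 hi)
  have hmu0 : ∀ i, Lm ≤ i → mu i = 0 := by
    intro i hi
    by_contra h0
    exact absurd ((hLm i).1 h0) (not_lt.2 hi)
  -- the polynomial in `t`
  set wsp : ℕ → (ℕ → ℕ) → ℕ → Polynomial (RatFunc F) := fun L ν m =>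
    Polynomial.C (schurSpec (RatFunc F) s L ν m)
      - Polynomial.C ((s ^ (m + 1) - (s⁻¹) ^ (m + 1))⁻¹) * Polynomial.X ^ (m + 1) with hwsp
  set Φ : Polynomial (RatFunc F) :=
    MvPolynomial.aeval (wsp 0 (fun _ => 0)) fl * MvPolynomial.aeval (wsp Ll lam) fm
      - MvPolynomial.aeval (wsp 0 (fun _ => 0)) fm * MvPolynomial.aeval (wsp Lm mu) fl
    with hPhidef
  have heval : ∀ (c : RatFunc F) (L : ℕ) (ν : ℕ → ℕ) (f : MvPolynomial ℕ (RatFunc F)),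
      Polynomial.aeval c (MvPolynomial.aeval (wsp L ν) f)
        = MvPolynomial.aeval (fun m => schurSpec (RatFunc F) s L ν m
            - (s ^ (m + 1) - (s⁻¹) ^ (m + 1))⁻¹ * c ^ (m + 1)) f := by
    intro c L ν f
    have hg : (fun m : ℕ => Polynomial.aeval c (wsp L ν m))
        = fun m => schurSpec (RatFunc F) s L ν m
            - (s ^ (m + 1) - (s⁻¹) ^ (m + 1))⁻¹ * c ^ (m + 1) := by
      funext m
      simp [hwsp]
    rw [comp_aeval_apply, hg]
  -- roots of Φ
  have hroot : ∀ N : ℕ, Ll ≤ N → Lm ≤ N → Polynomial.aeval ((s⁻¹) ^ (2 * N)) Φ = 0 := by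
    intro N h1 h2
    rw [hPhidef, map_sub, map_mul, map_mul, heval, heval, heval, heval]
    have hw : ∀ (L : ℕ) (ν : ℕ → ℕ), (∀ i, L ≤ i → ν i = 0) → L ≤ N →
        (fun m => schurSpec (RatFunc F) s L ν m
            - (s ^ (m + 1) - (s⁻¹) ^ (m + 1))⁻¹ * ((s⁻¹) ^ (2 * N)) ^ (m + 1))
          = fun m => ∑ i : Fin N, xsp u N ν i ^ (m + 1) := by
      intro L ν hv hLN
      funext m
      rw [psum_xsp u hu N L ν hv hLN m, hus]
    rw [hw 0 (fun _ => 0) (fun _ _ => rfl) (Nat.zero_le N), hw Ll lam hlam0 h1,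
      hw Lm mu hmu0 h2, sub_eq_zero]
    exact finite_sym u hu N lam mu hlam hmu fl fm (hfl N h1) (hfm N h2)
  -- Φ is identically zero
  have hPhi0 : Φ = 0 := by
    apply Polynomial.eq_zero_of_infinite_isRoot
    apply Set.infinite_of_injective_forall_mem
      (f := fun k : ℕ => (s⁻¹) ^ (2 * (max Ll Lm + k)))
    · intro k k' hkk
      simp only at hkk
      have h1 : ∀ n : ℕ, (s⁻¹) ^ n = up u (-(n : ℤ)) := fun n => (up_neg_natCast u n).symm
      rw [h1, h1] at hkk
      have := up_injective hu hkk
      omega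
    · intro k
      have h := hroot (max Ll Lm + k) (le_trans (le_max_left _ _) (Nat.le_add_right _ _))
        (le_trans (le_max_right _ _) (Nat.le_add_right _ _))
      show Polynomial.IsRoot Φ _
      unfold Polynomial.IsRoot
      rw [← Polynomial.coe_aeval_eq_eval]
      exact h
  -- evaluate at t = 0
  have hfinal := congrArg (Polynomial.aeval (0 : RatFunc F)) hPhi0
  rw [hPhidef, map_sub, map_mul, map_mul, heval, heval, heval, heval, map_zero] at hfinal
  have hzero : ∀ (L : ℕ) (ν : ℕ → ℕ),
      (fun m => schurSpec (RatFunc F) s L ν m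
          - (s ^ (m + 1) - (s⁻¹) ^ (m + 1))⁻¹ * (0 : RatFunc F) ^ (m + 1))
        = schurSpec (RatFunc F) s L ν := by
    intro L ν
    funext m
    simp
  rw [hzero, hzero, hzero] at hfinal
  exact sub_eq_zero.1 hfinal
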